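/- Let Σ be a positive semidefinite p×p matrix, π1 ∈ (0,1), π0 = 1-π1, and β0, β1 ∈ R^p. Define σ̃²_cr,adj - σ̃²_cr = (1/(4π1))[Var(U1 - β1ᵀX) - Var(U1)] + (1/(4π0))[Var(U0 - β0ᵀX) - Var(U0)] + ¼(β1-β0)ᵀΣ(β1-β0), where βa = Σ^{-1}Cov(X, Ua) and Σ = Var(X). Then σ̃²_cr,adj - σ̃²_cr = -(1/(4π1π0))(π0β1 + π1β0)ᵀΣ(π0β1 + π1β0) ≤ 0. -/

import Mathlib

open MeasureTheory ProbabilityTheory Matrix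

/-- Covariance of two real random variables. -/
noncomputable def cov {Ω : Type*} [MeasurableSpace Ω] (μ : Measure Ω) (f g : Ω → ℝ) : ℝ :=
  (∫ ω, f ω * g ω ∂μ) - (∫ ω, f ω ∂μ) * ∫ ω, g ω ∂μ

lemma int_mul {Ω : Type*} [MeasurableSpace Ω] {μ : Measure Ω} {f g : Ω → ℝ}
    (hf : MemLp f 2 μ) (hg : MemLp g 2 μ) : Integrable (fun ω => f ω * g ω) μ := by
  refine Integrable.mono' ((hf.integrable_sq.add hg.integrable_sq).div_const 2)
    (hf.aestronglyMeasurable.mul hg.aestronglyMeasurable) ?_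
  filter_upwards with ω
  simp only [Pi.add_apply, Pi.div_apply]
  rw [Real.norm_eq_abs, abs_mul]
  nlinarith [sq_nonneg (|f ω| - |g ω|), abs_nonneg (f ω), abs_nonneg (g ω), sq_abs (f ω), sq_abs (g ω)]

lemma var_sub_lin {Ω : Type*} [MeasurableSpace Ω] {μ : Measure Ω} [IsProbabilityMeasure μ] {p : ℕ}
    (X : Ω → Fin p → ℝ) (U : Ω → ℝ) (hX : ∀ i, MemLp (fun ω => X ω i) 2 μ)
    (hU : MemLp U 2 μ) (β : Fin p → ℝ) :
    variance (fun ω => U ω - ∑ i, β i * X ω i) μ - variance U μ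
      = (∑ i, ∑ j, β i * β j * cov μ (fun ω => X ω i) (fun ω => X ω j))
        - 2 * ∑ i, β i * cov μ (fun ω => X ω i) U := by
  set S : Ω → ℝ := fun ω => ∑ i, β i * X ω i with hSdef
  have hS : MemLp S 2 μ :=
    memLp_finset_sum Finset.univ (f := fun i ω => β i * X ω i)
      (fun i _ => (hX i).const_mul (β i))
  have hUS : MemLp (fun ω => U ω - S ω) 2 μ := hU.sub hS
  have hIS : ∫ ω, S ω ∂μ = ∑ i, β i * ∫ ω, X ω i ∂μ := by
    rw [integral_finset_sum _ (fun i _ => ((hX i).integrable one_le_two).const_mul (β i))]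
    simp_rw [integral_const_mul]
  have hIUS : ∫ ω, S ω * U ω ∂μ = ∑ i, β i * ∫ ω, X ω i * U ω ∂μ := by
    have h1 : ∀ ω, S ω * U ω = ∑ i, β i * (X ω i * U ω) := by
      intro ω
      simp only [hSdef, Finset.sum_mul]
      refine Finset.sum_congr rfl fun i _ => ?_
      ring
    simp_rw [h1]
    rw [integral_finset_sum _ (fun i _ => (int_mul (hX i) hU).const_mul (β i))]
    simp_rw [integral_const_mul]
  have hISS : ∫ ω, S ω * S ω ∂μ = ∑ i, β i * ∑ j, β j * ∫ ω, X ω i * X ω j ∂μ := by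
    have h1 : ∀ ω, S ω * S ω = ∑ i, β i * ∑ j, β j * (X ω i * X ω j) := by
      intro ω
      simp only [hSdef]
      rw [Finset.sum_mul]
      refine Finset.sum_congr rfl fun i _ => ?_
      rw [Finset.mul_sum, Finset.mul_sum]
      refine Finset.sum_congr rfl fun j _ => ?_
      ring
    simp_rw [h1]
    rw [integral_finset_sum]
    · refine Finset.sum_congr rfl fun i _ => ?_
      rw [integral_const_mul, integral_finset_sum _ (fun j _ => (int_mul (hX i) (hX j)).const_mul (β j))]
      simp_rw [integral_const_mul]
    · intro i _
      refine Integrable.const_mul ?_ (β i)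
      exact integrable_finset_sum _ (fun j _ => (int_mul (hX i) (hX j)).const_mul (β j))
  rw [variance_eq_sub hUS, variance_eq_sub hU]
  have i1 : Integrable (fun ω => U ω ^ 2 - 2 * (S ω * U ω)) μ :=
    hU.integrable_sq.sub ((int_mul hS hU).const_mul 2)
  have hexp : ∫ ω, (fun ω => U ω - S ω) ω ^ 2 ∂μ
      = ∫ ω, U ω ^ 2 ∂μ - 2 * ∫ ω, S ω * U ω ∂μ + ∫ ω, S ω * S ω ∂μ := by
    have h1 : ∀ ω, (U ω - S ω) ^ 2 = U ω ^ 2 - 2 * (S ω * U ω) + S ω * S ω := fun ω => by ring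
    simp only [Pi.pow_apply]
    simp_rw [h1]
    rw [integral_add i1 (int_mul hS hS),
      integral_sub hU.integrable_sq ((int_mul hS hU).const_mul 2), integral_const_mul]
  have hexp2 : ∫ ω, (fun ω => U ω - S ω) ω ∂μ = ∫ ω, U ω ∂μ - ∫ ω, S ω ∂μ :=
    integral_sub (hU.integrable one_le_two) (hS.integrable one_le_two)
  simp only [Pi.pow_apply] at hexp ⊢
  rw [hexp, hexp2, hIS, hIUS, hISS]
  simp only [cov]
  have hsq : (∑ i, β i * ∫ ω, X ω i ∂μ) ^ 2
      = ∑ i, β i * ∑ j, (β j * ∫ ω, X ω i ∂μ) * ∫ ω, X ω j ∂μ := by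
    rw [sq, Finset.sum_mul_sum]
    refine Finset.sum_congr rfl fun i _ => ?_
    rw [Finset.mul_sum]
    refine Finset.sum_congr rfl fun j _ => ?_
    ring
  have key : ∑ i, ∑ j, β i * β j * ((∫ ω, X ω i * X ω j ∂μ) - (∫ ω, X ω i ∂μ) * ∫ ω, X ω j ∂μ)
      = (∑ i, β i * ∑ j, β j * ∫ ω, X ω i * X ω j ∂μ)
        - (∑ i, β i * ∫ ω, X ω i ∂μ) ^ 2 := by
    rw [hsq, ← Finset.sum_sub_distrib]
    refine Finset.sum_congr rfl fun i _ => ?_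
    rw [← mul_sub, ← Finset.sum_sub_distrib]
    rw [Finset.mul_sum]
    refine Finset.sum_congr rfl fun j _ => ?_
    ring
  have key2 : ∑ i, β i * ((∫ ω, X ω i * U ω ∂μ) - (∫ ω, X ω i ∂μ) * ∫ ω, U ω ∂μ)
      = (∑ i, β i * ∫ ω, X ω i * U ω ∂μ) - (∫ ω, U ω ∂μ) * ∑ i, β i * ∫ ω, X ω i ∂μ := by
    rw [Finset.mul_sum, ← Finset.sum_sub_distrib]
    refine Finset.sum_congr rfl fun i _ => ?_
    ring
  rw [key, key2]
  ring

lemma cov_comm {Ω : Type*} [MeasurableSpace Ω] (μ : Measure Ω) (f g : Ω → ℝ) :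
    cov μ f g = cov μ g f := by
  have h : (fun ω => f ω * g ω) = fun ω => g ω * f ω := funext fun ω => mul_comm _ _
  simp only [cov, h, mul_comm]

/-- With Σ = Var(X) positive definite and βa = Σ⁻¹Cov(X,Ua),
σ̃²_cr,adj - σ̃²_cr = (1/(4π1))[Var(U1 - β1ᵀX) - Var(U1)]
+ (1/(4π0))[Var(U0 - β0ᵀX) - Var(U0)] + ¼(β1-β0)ᵀΣ(β1-β0)
= -(1/(4π1π0))(π0β1 + π1β0)ᵀΣ(π0β1 + π1β0) ≤ 0. -/
theorem stmt_13 {Ω : Type*} [MeasurableSpace Ω] (μ : Measure Ω) [IsProbabilityMeasure μ]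
    {p : ℕ} (X : Ω → Fin p → ℝ) (U0 U1 : Ω → ℝ)
    (hX : ∀ i, MemLp (fun ω => X ω i) 2 μ)
    (hU0 : MemLp U0 2 μ) (hU1 : MemLp U1 2 μ)
    (π1 : ℝ) (hπ1 : π1 ∈ Set.Ioo (0 : ℝ) 1) (π0 : ℝ) (hπ0 : π0 = 1 - π1)
    (Sm : Matrix (Fin p) (Fin p) ℝ)
    (hSm : Sm = Matrix.of fun i j => cov μ (fun ω => X ω i) (fun ω => X ω j))
    (hpd : Sm.PosDef)
    (β0 β1 : Fin p → ℝ)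
    (hβ0 : β0 = Sm⁻¹.mulVec fun i => cov μ (fun ω => X ω i) U0)
    (hβ1 : β1 = Sm⁻¹.mulVec fun i => cov μ (fun ω => X ω i) U1) :
    (1 / (4 * π1)) * (variance (fun ω => U1 ω - ∑ i, β1 i * X ω i) μ - variance U1 μ)
        + (1 / (4 * π0)) * (variance (fun ω => U0 ω - ∑ i, β0 i * X ω i) μ - variance U0 μ)
        + (1 / 4) * ((β1 - β0) ⬝ᵥ Sm.mulVec (β1 - β0))
      = -(1 / (4 * π1 * π0)) * ((π0 • β1 + π1 • β0) ⬝ᵥ Sm.mulVec (π0 • β1 + π1 • β0))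
    ∧ (1 / (4 * π1)) * (variance (fun ω => U1 ω - ∑ i, β1 i * X ω i) μ - variance U1 μ)
        + (1 / (4 * π0)) * (variance (fun ω => U0 ω - ∑ i, β0 i * X ω i) μ - variance U0 μ)
        + (1 / 4) * ((β1 - β0) ⬝ᵥ Sm.mulVec (β1 - β0)) ≤ 0 := by
  have hdet : IsUnit Sm.det := isUnit_iff_ne_zero.mpr hpd.det_pos.ne'
  have hc1 : Sm *ᵥ β1 = fun i => cov μ (fun ω => X ω i) U1 := by
    rw [hβ1, mulVec_mulVec, Matrix.mul_nonsing_inv _ hdet, one_mulVec]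
  have hc0 : Sm *ᵥ β0 = fun i => cov μ (fun ω => X ω i) U0 := by
    rw [hβ0, mulVec_mulVec, Matrix.mul_nonsing_inv _ hdet, one_mulVec]
  have hv : ∀ (U : Ω → ℝ) (β : Fin p → ℝ), MemLp U 2 μ →
      Sm *ᵥ β = (fun i => cov μ (fun ω => X ω i) U) →
      variance (fun ω => U ω - ∑ i, β i * X ω i) μ - variance U μ = -(β ⬝ᵥ Sm *ᵥ β) := by
    intro U β hU hc
    rw [var_sub_lin X U hX hU β]
    have eA : ∑ i, ∑ j, β i * β j * cov μ (fun ω => X ω i) (fun ω => X ω j)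
        = β ⬝ᵥ Sm *ᵥ β := by
      simp only [dotProduct, mulVec, hSm, Matrix.of_apply]
      refine Finset.sum_congr rfl fun i _ => ?_
      rw [Finset.mul_sum]
      refine Finset.sum_congr rfl fun j _ => ?_
      ring
    have eB : ∑ i, β i * cov μ (fun ω => X ω i) U = β ⬝ᵥ Sm *ᵥ β := by
      simp only [dotProduct]
      refine Finset.sum_congr rfl fun i _ => ?_
      rw [← congrFun hc i]
    rw [eA, eB]
    ring
  have hv1 := hv U1 β1 hU1 hc1
  have hv0 := hv U0 β0 hU0 hc0
  have hsymm : β0 ⬝ᵥ Sm *ᵥ β1 = β1 ⬝ᵥ Sm *ᵥ β0 := by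
    simp only [dotProduct, mulVec, hSm, Matrix.of_apply, Finset.mul_sum]
    rw [Finset.sum_comm]
    refine Finset.sum_congr rfl fun i _ => ?_
    refine Finset.sum_congr rfl fun j _ => ?_
    rw [cov_comm]
    ring
  have hπ1pos := hπ1.1
  have hπ0pos : 0 < π0 := by rw [hπ0]; linarith [hπ1.2]
  have heq : (1 / (4 * π1)) * (variance (fun ω => U1 ω - ∑ i, β1 i * X ω i) μ - variance U1 μ)
        + (1 / (4 * π0)) * (variance (fun ω => U0 ω - ∑ i, β0 i * X ω i) μ - variance U0 μ)
        + (1 / 4) * ((β1 - β0) ⬝ᵥ Sm.mulVec (β1 - β0))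
      = -(1 / (4 * π1 * π0)) * ((π0 • β1 + π1 • β0) ⬝ᵥ Sm.mulVec (π0 • β1 + π1 • β0)) := by
    rw [hv1, hv0]
    simp only [mulVec_sub, mulVec_add, mulVec_smul, sub_dotProduct, dotProduct_sub,
      add_dotProduct, dotProduct_add, smul_dotProduct, dotProduct_smul, smul_eq_mul]
    rw [hsymm]
    subst hπ0
    field_simp
    ring
  refine ⟨heq, ?_⟩
  rw [heq]
  have hq : 0 ≤ (π0 • β1 + π1 • β0) ⬝ᵥ Sm.mulVec (π0 • β1 + π1 • β0) := by
    have := hpd.posSemidef.dotProduct_mulVec_nonneg (π0 • β1 + π1 • β0)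
    simpa using this
  have hcoef : (0:ℝ) ≤ 1 / (4 * π1 * π0) := le_of_lt (by positivity)
  exact mul_nonpos_of_nonpos_of_nonneg (neg_nonpos.mpr hcoef) hq
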